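/- arXiv:math/0201046 — 9 statements merged into one kernel-verified Lean document; each statement's English description precedes it below -/
import Mathlib

section
/- The map T(x,y) = (y, ⌊(1+x)/y⌋·y − x) maps the Farey triangle T = {(x,y) ∈ [0,1]² : x+y > 1} bijectively onto itself and is area-preserving. -/
open Set MeasureTheory

/-- The Farey triangle `T = {(x,y) ∈ [0,1]² : x + y > 1}`. -/
def fareyTriangle : Set (ℝ × ℝ) :=
  {p | 0 ≤ p.1 ∧ p.1 ≤ 1 ∧ 0 ≤ p.2 ∧ p.2 ≤ 1 ∧ 1 < p.1 + p.2}

/-- The transformation `T(x,y) = (y, ⌊(1+x)/y⌋·y − x)`. -/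
noncomputable def fareyMap (p : ℝ × ℝ) : ℝ × ℝ :=
  (p.2, (⌊(1 + p.1) / p.2⌋ : ℝ) * p.2 - p.1)

/-- The inverse transformation `T⁻¹(x,y) = (⌊(1+y)/x⌋·x − y, x)`. -/
noncomputable def fareyInv (p : ℝ × ℝ) : ℝ × ℝ :=
  ((⌊(1 + p.2) / p.1⌋ : ℝ) * p.1 - p.2, p.1)

/-- `κ(x,y) = ⌊(1+x)/y⌋`. -/
noncomputable def fareyKappa (p : ℝ × ℝ) : ℤ := ⌊(1 + p.1) / p.2⌋

/-- `T_k = {(x,y) ∈ T : ⌊(1+x)/y⌋ = k}`. -/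
def fareySubTriangle (k : ℕ) : Set (ℝ × ℝ) :=
  {p ∈ fareyTriangle | ⌊(1 + p.1) / p.2⌋ = (k : ℤ)}

/-!
With `σ(x,y) = (y,x)` one has `T⁻¹ = σ ∘ T ∘ σ`, and the triangle is `σ`-invariant, so bijectivity
reduces to `T⁻¹ ∘ T = id` on the triangle. That identity holds because for `k = κ(x,y)` we have
`1 + (k y - x) = (1 - x) + k y` with `0 ≤ 1 - x < y`, so `⌊(1 + (k y - x)) / y⌋ = k`.

On the fibre `κ = k` the map `T` is the linear map `(x,y) ↦ (y, k y - x)` of determinant `1`.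
Since `T` is injective on the triangle, it maps the fibres of a measurable `s` to disjoint
measurable sets of the same areas, and summing over `k` gives `area (T s) = area s`.
-/

open Function

theorem measure_image_eq_of_injOn_of_eq_piecewise {α β ι : Type*} [MeasurableSpace α]
    [MeasurableSpace β] [MeasurableSpace ι] [MeasurableSingletonClass ι] [Countable ι]
    {μ : Measure α} {ν : Measure β} {f : α → β} {s : Set α} (hs : MeasurableSet s)
    (hf : InjOn f s) {κ : α → ι} (hκ : Measurable κ) {g : ι → α → β}
    (hg : ∀ i, MeasurableEmbedding (g i)) (hgμ : ∀ i t, ν (g i '' t) = μ t)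
    (hfg : ∀ x ∈ s, f x = g (κ x) x) :
    ν (f '' s) = μ s := by
  set piece : ι → Set α := fun i => s ∩ κ ⁻¹' {i}
  have piece_meas : ∀ i, MeasurableSet (piece i) := fun i =>
    hs.inter (hκ (measurableSet_singleton i))
  have piece_disj : Pairwise (Disjoint on piece) := fun i j hij =>
    Disjoint.mono inter_subset_right inter_subset_right ((disjoint_singleton.2 hij).preimage κ)
  have s_eq : s = ⋃ i, piece i := by
    rw [← inter_iUnion, ← preimage_iUnion, iUnion_of_singleton, preimage_univ, inter_univ]
  have image_piece : ∀ i, f '' piece i = g i '' piece i := fun i =>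
    image_congr fun x hx => by rw [hfg x hx.1, show κ x = i from hx.2]
  have image_disj : Pairwise (Disjoint on fun i => f '' piece i) := fun i j hij =>
    (piece_disj hij).image hf inter_subset_left inter_subset_left
  have image_meas : ∀ i, MeasurableSet (f '' piece i) := fun i => by
    rw [image_piece]
    exact (hg i).measurableSet_image.2 (piece_meas i)
  calc ν (f '' s) = ∑' i, ν (f '' piece i) := by
        rw [s_eq, image_iUnion, measure_iUnion image_disj image_meas]
    _ = ∑' i, μ (piece i) := by simp only [image_piece, hgμ]
    _ = μ s := by rw [s_eq, measure_iUnion piece_disj piece_meas]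

theorem Int.floor_add_intCast_mul_div {K : Type*} [Field K] [LinearOrder K] [IsStrictOrderedRing K]
    [FloorRing K] {b c : K} (n : ℤ) (hb : 0 ≤ b) (hbc : b < c) :
    ⌊(b + n * c) / c⌋ = n := by
  have hc : 0 < c := hb.trans_lt hbc
  rw [add_div, mul_div_cancel_right₀ _ hc.ne', Int.floor_add_intCast, add_eq_right,
    Int.floor_eq_zero_iff]
  exact ⟨div_nonneg hb hc.le, (div_lt_one hc).2 hbc⟩

lemma swap_mem_fareyTriangle {p : ℝ × ℝ} : p.swap ∈ fareyTriangle ↔ p ∈ fareyTriangle := by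
  constructor <;> rintro ⟨h₁, h₂, h₃, h₄, h₅⟩ <;> exact ⟨h₃, h₄, h₁, h₂, h₅.trans_eq (add_comm _ _)⟩

lemma fareyInv_eq_swap_fareyMap_swap (p : ℝ × ℝ) : fareyInv p = (fareyMap p.swap).swap := rfl

lemma fareyMap_mapsTo : MapsTo fareyMap fareyTriangle fareyTriangle := by
  rintro ⟨x, y⟩ ⟨-, hx₁, hy₀, hy₁, hxy⟩
  dsimp only at hx₁ hy₀ hy₁ hxy
  have hy : 0 < y := by linarith
  have hle : (⌊(1 + x) / y⌋ : ℝ) * y ≤ 1 + x := (le_div_iff₀ hy).1 (Int.floor_le _)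
  have hlt : 1 + x < (⌊(1 + x) / y⌋ + 1 : ℝ) * y := (div_lt_iff₀ hy).1 (Int.lt_floor_add_one _)
  refine ⟨hy₀, hy₁, ?_, ?_, ?_⟩ <;> simp only [fareyMap] <;> linarith

lemma fareyInv_fareyMap {p : ℝ × ℝ} (hp : p ∈ fareyTriangle) : fareyInv (fareyMap p) = p := by
  obtain ⟨x, y⟩ := p
  obtain ⟨-, hx₁, -, -, hxy⟩ := hp
  have key : 1 + ((⌊(1 + x) / y⌋ : ℝ) * y - x) = (1 - x) + ⌊(1 + x) / y⌋ * y := by ring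
  simp only [fareyMap, fareyInv, key, Int.floor_add_intCast_mul_div _ (sub_nonneg.2 hx₁)
    (by linarith : 1 - x < y)]
  simp

lemma fareyMap_fareyInv {p : ℝ × ℝ} (hp : p ∈ fareyTriangle) : fareyMap (fareyInv p) = p := by
  change (fareyInv (fareyMap p.swap)).swap = p
  rw [fareyInv_fareyMap (swap_mem_fareyTriangle.2 hp), Prod.swap_swap]

lemma fareyInv_mapsTo : MapsTo fareyInv fareyTriangle fareyTriangle := fun _ hp =>
  swap_mem_fareyTriangle.2 (fareyMap_mapsTo (swap_mem_fareyTriangle.2 hp))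

lemma fareyMap_bijOn : BijOn fareyMap fareyTriangle fareyTriangle :=
  InvOn.bijOn ⟨fun _ => fareyInv_fareyMap, fun _ => fareyMap_fareyInv⟩
    fareyMap_mapsTo fareyInv_mapsTo

def fareyBranch (k : ℤ) : (ℝ × ℝ) →ₗ[ℝ] ℝ × ℝ :=
  (LinearMap.snd ℝ ℝ ℝ).prod ((k : ℝ) • LinearMap.snd ℝ ℝ ℝ - LinearMap.fst ℝ ℝ ℝ)

@[simp]
lemma fareyBranch_apply (k : ℤ) (p : ℝ × ℝ) : fareyBranch k p = (p.2, k * p.2 - p.1) := rfl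

lemma fareyMap_eq_fareyBranch_fareyKappa (p : ℝ × ℝ) :
    fareyMap p = fareyBranch (fareyKappa p) p := rfl

lemma det_fareyBranch (k : ℤ) : LinearMap.det (fareyBranch k) = 1 := by
  rw [← LinearMap.det_toMatrix (Module.Basis.finTwoProd ℝ), Matrix.det_fin_two]
  simp [LinearMap.toMatrix_apply]

lemma volume_image_fareyBranch (k : ℤ) (s : Set (ℝ × ℝ)) :
    volume (fareyBranch k '' s) = volume s := by
  simp [Measure.addHaar_image_linearMap, det_fareyBranch]

lemma fareyBranch_injective (k : ℤ) : Injective (fareyBranch k) := by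
  intro p q h
  obtain ⟨h₂, h₁⟩ := Prod.mk.inj (by simpa only [fareyBranch_apply] using h)
  exact Prod.ext (by rw [h₂] at h₁; linarith) h₂

lemma measurableEmbedding_fareyBranch (k : ℤ) : MeasurableEmbedding (fareyBranch k) :=
  (fareyBranch k).continuous_of_finiteDimensional.measurableEmbedding (fareyBranch_injective k)

lemma measurable_fareyKappa : Measurable fareyKappa :=
  ((measurable_const.add measurable_fst).div measurable_snd).floor

theorem fareyMap_bijOn_and_areaPreserving :
    Set.BijOn fareyMap fareyTriangle fareyTriangle ∧
      ∀ s ⊆ fareyTriangle, MeasurableSet s →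
        volume (fareyMap '' s) = volume s :=
  ⟨fareyMap_bijOn, fun _ hs hms =>
    measure_image_eq_of_injOn_of_eq_piecewise hms (fareyMap_bijOn.injOn.mono hs)
      measurable_fareyKappa measurableEmbedding_fareyBranch volume_image_fareyBranch
      fun p _ => fareyMap_eq_fareyBranch_fareyKappa p⟩
end

section
/- If γ = a/q < γ' = a'/q' < γ'' = a''/q'' are three consecutive elements of the Farey sequence F_Q, then T(q/Q, q'/Q) = (q'/Q, q''/Q), where T(x,y) = (y, ⌊(1+x)/y⌋·y − x). In particular q'' = ⌊(Q+q)/q'⌋·q' − q. -/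
/-- `(a, q)` represents an element of the Farey sequence `F_Q`. -/
def IsFarey (Q a q : ℕ) : Prop :=
  1 ≤ a ∧ a ≤ q ∧ q ≤ Q ∧ Nat.gcd a q = 1

/-- `a/q < a'/q'` are consecutive elements of `F_Q`. -/
def FareyConsecutive (Q a q a' q' : ℕ) : Prop :=
  IsFarey Q a q ∧ IsFarey Q a' q' ∧ (a : ℚ) / q < (a' : ℚ) / q' ∧
    ∀ b c : ℕ, IsFarey Q b c →
      ¬((a : ℚ) / q < (b : ℚ) / c ∧ (b : ℚ) / c < (a' : ℚ) / q')

lemma bezout_range (a q Q : ℕ) (hg : Nat.gcd a q = 1) (hq : 1 ≤ q) :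
    ∃ b c : ℤ, b * q - a * c = 1 ∧ (Q : ℤ) - q < c ∧ c ≤ Q := by
  have hb : (1 : ℤ) = a * Nat.gcdA a q + q * Nat.gcdB a q := by
    rw [← Nat.gcd_eq_gcd_ab, hg]; norm_num
  set c₀ : ℤ := -Nat.gcdA a q with hc₀
  set b₀ : ℤ := Nat.gcdB a q with hb₀
  have h1 : b₀ * q - a * c₀ = 1 := by rw [hc₀, hb₀]; linarith [hb]
  have hqpos : (0 : ℤ) < q := by exact_mod_cast hq
  have hmod := Int.mul_ediv_add_emod ((Q : ℤ) - c₀) q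
  refine ⟨b₀ + a * (((Q : ℤ) - c₀) / q), (Q : ℤ) - ((Q : ℤ) - c₀) % q, ?_, ?_, ?_⟩
  · ring_nf
    ring_nf at h1 hmod ⊢
    nlinarith [h1, hmod]
  · have := Int.emod_lt_of_pos ((Q : ℤ) - c₀) hqpos
    linarith
  · have := Int.emod_nonneg ((Q : ℤ) - c₀) (by positivity : (q:ℤ) ≠ 0)
    linarith

set_option maxHeartbeats 1000000 in
lemma farey_consecutive_eq (Q a q a' q' : ℕ) (h : FareyConsecutive Q a q a' q') :
    (q : ℤ) * a' - (a : ℤ) * q' = 1 ∧ Q < q + q' := by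
  obtain ⟨⟨ha1, haq, hqQ, hg⟩, ⟨ha1', haq', hqQ', hg'⟩, hlt, hmax⟩ := h
  have hq : 1 ≤ q := le_trans ha1 haq
  have hq' : 1 ≤ q' := le_trans ha1' haq'
  obtain ⟨b, c, hbc, hc1, hc2⟩ := bezout_range a q Q hg hq
  have hczpos : (0:ℤ) < c := by
    have : (q:ℤ) ≤ Q := by exact_mod_cast hqQ
    linarith
  have hbzpos : (0:ℤ) < b := by
    have ha1z : (1:ℤ) ≤ a := by exact_mod_cast ha1
    have hq1z : (1:ℤ) ≤ q := by exact_mod_cast hq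
    nlinarith
  -- replace b c by naturals
  set B := b.toNat with hBdef
  set C := c.toNat with hCdef
  have hB : (B:ℤ) = b := Int.toNat_of_nonneg hbzpos.le
  have hC : (C:ℤ) = c := Int.toNat_of_nonneg hczpos.le
  rw [← hB] at hbzpos
  rw [← hB, ← hC] at hbc
  rw [← hC] at hc1 hc2 hczpos
  clear hB hC hBdef hCdef
  have hB1 : 1 ≤ B := by exact_mod_cast hbzpos
  have hC1 : 1 ≤ C := by exact_mod_cast hczpos
  have hCQ : C ≤ Q := by exact_mod_cast hc2
  -- rationals positivity
  have hqQ0 : (0:ℚ) < q := by exact_mod_cast hq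
  have hq'Q0 : (0:ℚ) < q' := by exact_mod_cast hq'
  have hCQ0 : (0:ℚ) < C := by exact_mod_cast hC1
  -- a/q < B/C
  have hA : (a:ℚ)/q < (B:ℚ)/C := by
    rw [div_lt_div_iff₀ hqQ0 hCQ0]
    have : (a:ℤ)*C < B*q := by linarith
    exact_mod_cast this
  -- a q' < a' q from hlt
  have hY : (a:ℤ)*q' + 1 ≤ a'*q := by
    rw [div_lt_div_iff₀ hqQ0 hq'Q0] at hlt
    have : (a:ℤ)*q' < a'*q := by exact_mod_cast hlt
    omega
  -- B/C ≤ a'/q'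
  have hBle : (B:ℚ)/C ≤ (a':ℚ)/q' := by
    by_contra hcon
    push_neg at hcon
    rw [div_lt_div_iff₀ hq'Q0 hCQ0] at hcon
    have hX : (a':ℤ)*C + 1 ≤ B*q' := by
      have : (a':ℤ)*C < B*q' := by exact_mod_cast hcon
      omega
    -- q' = q*(B q' - a' C) + C*(a' q - a q')
    have hid : (q':ℤ) = q*(B*q' - a'*C) + C*(a'*q - a*q') := by
      have : (q':ℤ) * (B*q - a*C) = q*(B*q' - a'*C) + C*(a'*q - a*q') := by ring
      rw [hbc] at this; linarith
    have h1 : (q:ℤ)*(B*q' - a'*C) ≥ q := by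
      have hq1z : (1:ℤ) ≤ q := by exact_mod_cast hq
      nlinarith
    have h2 : (C:ℤ)*(a'*q - a*q') ≥ C := by nlinarith
    have hq'Q : (q':ℤ) ≤ Q := by exact_mod_cast hqQ'
    have hqz : (q:ℤ) ≤ Q := by exact_mod_cast hqQ
    linarith
  -- B/C = a'/q'
  have heq : (B:ℚ)/C = (a':ℚ)/q' := by
    rcases lt_or_eq_of_le hBle with hstrict | he
    · exfalso
      have hBC : B ≤ C := by
        have h1 : (B:ℚ)/C < 1 := by
          calc (B:ℚ)/C < (a':ℚ)/q' := hstrict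
            _ ≤ 1 := by
              rw [div_le_one hq'Q0]
              exact_mod_cast haq'
        rw [div_lt_one hCQ0] at h1
        exact_mod_cast h1.le
      have hgcd : Nat.gcd B C = 1 := by
        rw [← Int.gcd_natCast_natCast, ← Int.isCoprime_iff_gcd_eq_one]
        exact ⟨q, -(a:ℤ), by linarith⟩
      exact hmax B C ⟨hB1, hBC, hCQ, hgcd⟩ ⟨hA, hstrict⟩
    · exact he
  -- cross multiply : a' C = B q'
  have hcross : (a':ℤ) * C = B * q' := by
    rw [div_eq_div_iff hCQ0.ne' hq'Q0.ne'] at heq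
    exact_mod_cast heq.symm
  -- q' ∣ C and C ∣ q'
  have hcop1 : IsCoprime (q':ℤ) (a':ℤ) := by
    rw [Int.isCoprime_iff_gcd_eq_one, Int.gcd_natCast_natCast, Nat.gcd_comm]
    exact hg'
  have hcop2 : IsCoprime (C:ℤ) (B:ℤ) := by
    rw [Int.isCoprime_iff_gcd_eq_one, Int.gcd_natCast_natCast]
    rw [← Int.gcd_natCast_natCast, ← Int.isCoprime_iff_gcd_eq_one]
    exact ⟨-(a:ℤ), q, by linarith⟩
  have hd1 : (q':ℤ) ∣ C :=
    hcop1.dvd_of_dvd_mul_right (show (q':ℤ) ∣ (C:ℤ) * a' from ⟨B, by linarith⟩)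
  have hd2 : (C:ℤ) ∣ q' :=
    hcop2.dvd_of_dvd_mul_right (show (C:ℤ) ∣ (q':ℤ) * B from ⟨a', by linarith⟩)
  have hCq' : (C:ℤ) = q' := Int.dvd_antisymm (by positivity) (by positivity) hd2 hd1
  have hBa' : (B:ℤ) = a' := by
    have hq'0 : (q':ℤ) ≠ 0 := by positivity
    have := hcross
    rw [hCq'] at this
    exact (mul_right_cancel₀ hq'0 this).symm
  constructor
  · rw [← hBa', ← hCq']; linarith
  · have : (Q:ℤ) < q + q' := by rw [← hCq']; linarith
    exact_mod_cast this

theorem fareyMap_of_consecutive_triple (Q a q a' q' a'' q'' : ℕ)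
    (h1 : FareyConsecutive Q a q a' q') (h2 : FareyConsecutive Q a' q' a'' q'') :
    fareyMap ((q : ℝ) / Q, (q' : ℝ) / Q) = ((q' : ℝ) / Q, (q'' : ℝ) / Q) ∧
      (q'' : ℤ) = ((Q + q) / q' : ℕ) * q' - q := by
  obtain ⟨e1, hQ1⟩ := farey_consecutive_eq Q a q a' q' h1
  obtain ⟨e2, hQ2⟩ := farey_consecutive_eq Q a' q' a'' q'' h2
  obtain ⟨⟨ha1, haq, hqQ, hg⟩, ⟨ha1', haq', hq'Q, hg'⟩, -, -⟩ := h1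
  obtain ⟨-, ⟨ha1'', haq'', hq''Q, hg''⟩, -, -⟩ := h2
  have hq : 1 ≤ q := le_trans ha1 haq
  have hq' : 1 ≤ q' := le_trans ha1' haq'
  have hQpos : 1 ≤ Q := le_trans hq hqQ
  have hcop : IsCoprime (q':ℤ) (a':ℤ) := by
    rw [Int.isCoprime_iff_gcd_eq_one, Int.gcd_natCast_natCast, Nat.gcd_comm]; exact hg'
  have hdvdZ : (q':ℤ) ∣ ((q:ℤ) + q'') :=
    hcop.dvd_of_dvd_mul_right
      (show (q':ℤ) ∣ ((q:ℤ)+q'')*a' from ⟨(a:ℤ) + a'', by linear_combination e1 - e2⟩)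
  have hdvd : q' ∣ q + q'' := by
    have : ((q':ℕ):ℤ) ∣ ((q + q'' : ℕ):ℤ) := by push_cast; exact hdvdZ
    exact_mod_cast this
  set k := (q + q'') / q' with hkdef
  have hk : k * q' = q + q'' := Nat.div_mul_cancel hdvd
  have hub : Q + q < (k+1) * q' := by
    have h1 : (k+1)*q' = q + q'' + q' := by rw [add_mul, hk]; ring
    omega
  have hlb : k * q' ≤ Q + q := by omega
  have hfd : (Q + q) / q' = k := Nat.div_eq_of_lt_le hlb hub
  have hkZ : (k:ℤ) * q' = q + q'' := by exact_mod_cast hk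
  constructor
  · have hQR : (0:ℝ) < Q := by exact_mod_cast hQpos
    have hq'R : (0:ℝ) < q' := by exact_mod_cast hq'
    have harg : (1 + (q:ℝ)/Q) / ((q':ℝ)/Q) = ((Q:ℝ) + q)/q' := by
      field_simp
    have hfl : ⌊((Q:ℝ)+q)/q'⌋ = (k:ℤ) := by
      rw [Int.floor_eq_iff]
      constructor
      · rw [le_div_iff₀ hq'R]
        have : ((k*q' : ℕ) : ℝ) ≤ ((Q+q : ℕ) : ℝ) := by exact_mod_cast hlb
        push_cast at this ⊢; linarith
      · rw [div_lt_iff₀ hq'R]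
        have : ((Q+q : ℕ) : ℝ) < (((k+1)*q' : ℕ) : ℝ) := by exact_mod_cast hub
        push_cast at this ⊢; linarith
    have hkR : (k:ℝ) * q' = q + q'' := by exact_mod_cast hk
    simp only [fareyMap, harg, hfl, Prod.mk.injEq]
    refine ⟨trivial, ?_⟩
    push_cast
    field_simp
    linarith [hkR]
  · rw [hfd]; push_cast; linarith
end

section
/- For any positive integers k_1,…,k_r, the set T_{k_1,…,k_r} = T_{k_1} ∩ T^{-1}T_{k_2} ∩ ⋯ ∩ T^{-r+1}T_{k_r} is a convex polygon. Explicitly, defining linear functions L_0(x,y)=x, L_1(x,y)=y, L_{i+1}=k_i L_i − L_{i-1}, the set T_{k_1,…,k_r} is given by the linear inequalities 1 ≥ L_i(x,y) > 0 for 0 ≤ i ≤ r+1 and L_i(x,y) + L_{i+1}(x,y) > 1 for 0 ≤ i ≤ r, hence is an intersection of finitely many half-planes intersected with the triangle, thus convex. -/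
open Set MeasureTheory

/-- `fareyCell k r = T_{k 1, …, k r} = T_{k 1} ∩ T⁻¹T_{k 2} ∩ ⋯ ∩ T^{-r+1}T_{k r}`. -/
noncomputable def fareyCell (k : ℕ → ℕ) (r : ℕ) : Set (ℝ × ℝ) :=
  {p | ∀ j ∈ Finset.Icc 1 r, fareyMap^[j - 1] p ∈ fareySubTriangle (k j)}

/-- The linear functions `L_0(x,y) = x`, `L_1(x,y) = y`,
`L_{i+1} = k_i L_i − L_{i−1}`. -/
noncomputable def fareyL (k : ℕ → ℕ) : ℕ → (ℝ × ℝ) → ℝ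
  | 0 => fun p => p.1
  | 1 => fun p => p.2
  | (n + 2) => fun p => (k (n + 1) : ℝ) * fareyL k (n + 1) p - fareyL k n p

lemma fareyL_linear (k : ℕ → ℕ) (i : ℕ) (p q : ℝ × ℝ) (a b : ℝ) :
    fareyL k i (a • p + b • q) = a * fareyL k i p + b * fareyL k i q := by
  induction i using Nat.strong_induction_on with
  | _ i ih =>
    match i with
    | 0 => simp [fareyL, Prod.smul_def, smul_eq_mul]
    | 1 => simp [fareyL, Prod.smul_def, smul_eq_mul]
    | (n+2) =>
      have h1 := ih (n+1) (by omega)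
      have h0 := ih n (by omega)
      simp only [fareyL, h1, h0]
      ring

lemma fareyIter_eq (k : ℕ → ℕ) (p : ℝ × ℝ) (j : ℕ)
    (h : ∀ m < j, ⌊(1 + fareyL k m p) / fareyL k (m+1) p⌋ = (k (m+1) : ℤ)) :
    fareyMap^[j] p = (fareyL k j p, fareyL k (j+1) p) := by
  induction j with
  | zero => simp [fareyL]
  | succ n ih =>
    have hn := ih (fun m hm => h m (by omega))
    rw [Function.iterate_succ_apply', hn]
    simp only [fareyMap, h n (by omega)]
    show (_, _) = (_, fareyL k (n+2) p)
    simp [fareyL]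

lemma fareyL_succ_succ (k : ℕ → ℕ) (n : ℕ) (p : ℝ × ℝ) :
    fareyL k (n+2) p = (k (n+1) : ℝ) * fareyL k (n+1) p - fareyL k n p := rfl

lemma comb_gt (a b u v c : ℝ) (ha : 0 ≤ a) (hb : 0 ≤ b) (hab : a + b = 1)
    (hu : c < u) (hv : c < v) : c < a * u + b * v := by
  rcases eq_or_lt_of_le ha with h | h
  · have hb1 : b = 1 := by linarith
    rw [← h, hb1]; simpa
  · have h1 : a * c < a * u := mul_lt_mul_of_pos_left hu h
    have h2 : b * c ≤ b * v := mul_le_mul_of_nonneg_left hv.le hb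
    have h3 : a * c + b * c = c := by rw [← add_mul, hab, one_mul]
    linarith

theorem fareyCell_eq_and_convex (k : ℕ → ℕ) (r : ℕ) (hr : 1 ≤ r)
    (hk : ∀ j, 1 ≤ j → j ≤ r → 1 ≤ k j) :
    fareyCell k r =
      {p : ℝ × ℝ |
        (∀ i ≤ r + 1, 0 < fareyL k i p ∧ fareyL k i p ≤ 1) ∧
          ∀ i ≤ r, 1 < fareyL k i p + fareyL k (i + 1) p} ∧
      Convex ℝ (fareyCell k r) := by
  have heq : fareyCell k r =
      {p : ℝ × ℝ |
        (∀ i ≤ r + 1, 0 < fareyL k i p ∧ fareyL k i p ≤ 1) ∧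
          ∀ i ≤ r, 1 < fareyL k i p + fareyL k (i + 1) p} := by
    ext p
    constructor
    · intro hp
      have key : ∀ j, j < r →
          (⌊(1 + fareyL k j p) / fareyL k (j+1) p⌋ = (k (j+1) : ℤ) ∧
            (fareyL k j p, fareyL k (j+1) p) ∈ fareyTriangle) := by
        intro j
        induction j using Nat.strong_induction_on with
        | _ j ih =>
          intro hj
          have hiter := fareyIter_eq k p j (fun m hm => (ih m hm (by omega)).1)
          have hmem := hp (j+1) (by simp [Finset.mem_Icc]; omega)
          simp only [Nat.add_sub_cancel] at hmem
          rw [hiter] at hmem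
          exact ⟨hmem.2, hmem.1⟩
      -- triangle facts
      have A : ∀ j < r, 0 ≤ fareyL k j p ∧ fareyL k j p ≤ 1 ∧
          0 ≤ fareyL k (j+1) p ∧ fareyL k (j+1) p ≤ 1 ∧
          1 < fareyL k j p + fareyL k (j+1) p := fun j hj => (key j hj).2
      have Apos : ∀ j < r, 0 < fareyL k (j+1) p := by
        intro j hj
        have := A j hj
        linarith [this.2.1, this.2.2.2.2]
      have B : ∀ j < r, fareyL k (j+2) p ≤ 1 ∧
          1 < fareyL k (j+1) p + fareyL k (j+2) p := by
        intro j hj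
        have hfl := (key j hj).1
        have hpos := Apos j hj
        rw [Int.floor_eq_iff] at hfl
        obtain ⟨h1, h2⟩ := hfl
        rw [le_div_iff₀ hpos] at h1
        rw [div_lt_iff₀ hpos] at h2
        push_cast at h1 h2
        rw [fareyL_succ_succ]
        constructor <;> nlinarith
      refine ⟨?_, ?_⟩
      · intro i hi
        have hub : fareyL k i p ≤ 1 := by
          match i, hi with
          | 0, _ => exact (A 0 (by omega)).2.1
          | 1, _ => exact (A 0 (by omega)).2.2.2.1
          | (j+2), hi => exact (B j (by omega)).1
        refine ⟨?_, hub⟩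
        match i, hi with
        | 0, _ =>
          have := A 0 (by omega)
          linarith [this.2.2.2.1, this.2.2.2.2]
        | (j+1), hi =>
          rcases Nat.lt_or_ge j r with h | h
          · exact Apos j h
          · -- j = r, i = r+1
            have hjr : j = r := by omega
            subst hjr
            have hB := (B (j-1) (by omega)).2
            have hA : fareyL k j p ≤ 1 := by
              have := A (j-1) (by omega)
              have he : j - 1 + 1 = j := by omega
              rw [he] at this
              exact this.2.2.2.1
            have he2 : j - 1 + 2 = j + 1 := by omega
            have he1 : j - 1 + 1 = j := by omega
            rw [he1, he2] at hB
            linarith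
      · intro i hi
        match i, hi with
        | 0, _ => exact (A 0 (by omega)).2.2.2.2
        | (j+1), hi => exact (B j (by omega)).2
    · intro hp
      obtain ⟨h1, h2⟩ := hp
      have floors : ∀ j < r, ⌊(1 + fareyL k j p) / fareyL k (j+1) p⌋ = (k (j+1) : ℤ) := by
        intro j hj
        have hpos : 0 < fareyL k (j+1) p := (h1 (j+1) (by omega)).1
        have hub2 : fareyL k (j+2) p ≤ 1 := (h1 (j+2) (by omega)).2
        have hsum : 1 < fareyL k (j+1) p + fareyL k (j+2) p := h2 (j+1) (by omega)
        rw [fareyL_succ_succ] at hub2 hsum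
        rw [Int.floor_eq_iff]
        constructor
        · rw [le_div_iff₀ hpos]; push_cast; nlinarith
        · rw [div_lt_iff₀ hpos]; push_cast; nlinarith
      intro j hj
      simp only [Finset.mem_Icc] at hj
      have hiter := fareyIter_eq k p (j-1) (fun m hm => floors m (by omega))
      have he : j - 1 + 1 = j := by omega
      rw [he] at hiter
      rw [hiter]
      refine ⟨⟨?_, ?_, ?_, ?_, ?_⟩, ?_⟩
      · exact (h1 (j-1) (by omega)).1.le
      · exact (h1 (j-1) (by omega)).2
      · exact (h1 j (by omega)).1.le
      · exact (h1 j (by omega)).2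
      · have := h2 (j-1) (by omega); rw [he] at this; exact this
      · have := floors (j-1) (by omega); rw [he] at this; exact this
  refine ⟨heq, ?_⟩
  rw [heq]
  intro p hp q hq a b ha hb hab
  obtain ⟨hp1, hp2⟩ := hp
  obtain ⟨hq1, hq2⟩ := hq
  constructor
  · intro i hi
    rw [fareyL_linear]
    obtain ⟨hpi1, hpi2⟩ := hp1 i hi
    obtain ⟨hqi1, hqi2⟩ := hq1 i hi
    exact ⟨comb_gt a b _ _ 0 ha hb hab hpi1 hqi1, by nlinarith⟩
  · intro i hi
    rw [fareyL_linear, fareyL_linear]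
    have hps := hp2 i hi
    have hqs := hq2 i hi
    have := comb_gt a b _ _ 1 ha hb hab hps hqs
    linarith
end

section
/- If m ≥ 5 and (x,y) ∈ T_m, then T^{-1}(x,y) = (x−y, x) and this point lies in T_1; i.e., T^{-1}(T_m) ⊂ T_1 for all m ≥ 5. -/
open Set MeasureTheory

/-!
From `⌊(1 + x) / y⌋ ≥ 5` we get `5y ≤ 1 + x`; half of this plus `3/2` of `x + y > 1` gives
`1 + y < 2x`. That single inequality says `⌊(1 + y) / x⌋ = 1`, so `T⁻¹(x, y) = (x - y, x)`, and it is
also exactly what puts `(x - y, x)` in `T` with `⌊(1 + x - y) / x⌋ = 1`.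
-/

section FloorDiv

variable {K : Type*} [Field K] [LinearOrder K] [IsStrictOrderedRing K] [FloorRing K] {a b : K}

lemma floor_div_eq_one (hb : 0 < b) (h₁ : b ≤ a) (h₂ : a < 2 * b) : ⌊a / b⌋ = 1 := by
  rw [Int.floor_eq_iff, le_div_iff₀ hb, div_lt_iff₀ hb]
  constructor <;> push_cast <;> linarith

lemma pos_of_floor_div_eq {k : ℤ} (hk : k ≠ 0) (hb : 0 ≤ b) (h : ⌊a / b⌋ = k) : 0 < b := by
  refine hb.lt_of_ne fun hb0 => hk ?_
  rw [← h, ← hb0, div_zero, Int.floor_zero]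

lemma mul_le_of_floor_div_eq {k : ℤ} (hb : 0 < b) (h : ⌊a / b⌋ = k) : k * b ≤ a :=
  (le_div_iff₀ hb).mp (h ▸ Int.floor_le _)

end FloorDiv

lemma fareyInv_eq_of_lt_two_mul {p : ℝ × ℝ} (hx : 0 < p.1) (h₁ : p.1 ≤ 1 + p.2)
    (h₂ : 1 + p.2 < 2 * p.1) : fareyInv p = (p.1 - p.2, p.1) := by
  simp [fareyInv, floor_div_eq_one hx h₁ h₂]

lemma sub_mem_fareySubTriangle_one {p : ℝ × ℝ} (hp : p ∈ fareyTriangle)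
    (h : 1 + p.2 < 2 * p.1) : (p.1 - p.2, p.1) ∈ fareySubTriangle 1 := by
  obtain ⟨hx0, hx1, hy0, hy1, hsum⟩ := hp
  refine ⟨⟨by linarith, by linarith, hx0, hx1, by linarith⟩, ?_⟩
  exact_mod_cast floor_div_eq_one (by linarith) (by linarith) (by linarith)

theorem fareyInv_of_mem_high (m : ℕ) (hm : 5 ≤ m) (p : ℝ × ℝ)
    (hp : p ∈ fareySubTriangle m) :
    fareyInv p = (p.1 - p.2, p.1) ∧ fareyInv p ∈ fareySubTriangle 1 := by
  obtain ⟨hT, hfloor⟩ := hp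
  obtain ⟨-, hx1, hy0, -, hsum⟩ := id hT
  have hy : 0 < p.2 := pos_of_floor_div_eq (by omega) hy0 hfloor
  have hmy : (m : ℝ) * p.2 ≤ 1 + p.1 := by exact_mod_cast mul_le_of_floor_div_eq hy hfloor
  have h5y : 5 * p.2 ≤ 1 + p.1 :=
    (mul_le_mul_of_nonneg_right (by exact_mod_cast hm) hy0).trans hmy
  have hkey : 1 + p.2 < 2 * p.1 := by linarith
  have hinv : fareyInv p = (p.1 - p.2, p.1) :=
    fareyInv_eq_of_lt_two_mul (by linarith) (by linarith) hkey
  exact ⟨hinv, hinv ▸ sub_mem_fareySubTriangle_one hT hkey⟩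
end

section
/- Let r ≥ 1 and m ≥ 4r+2. Then for every (x,y) ∈ T_m and every i ∈ {1,…,r}, one has T^{-i}(x,y) = (x − iy, x − (i−1)y); moreover T^{-1}T_m ⊂ T_1 and T^{-i}T_m ⊂ T_2 for 2 ≤ i ≤ r. -/
open Set MeasureTheory

lemma floor_div_eq_of (a b : ℝ) (k : ℤ) (hb : 0 < b) (h1 : (k : ℝ) * b ≤ a)
    (h2 : a < ((k : ℝ) + 1) * b) : ⌊a / b⌋ = k := by
  rw [Int.floor_eq_iff]
  refine ⟨(le_div_iff₀ hb).mpr h1, ?_⟩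
  rw [div_lt_iff₀ hb]
  linarith

theorem fareyInv_iterate_of_mem (r m : ℕ) (hr : 1 ≤ r) (hm : 4 * r + 2 ≤ m)
    (p : ℝ × ℝ) (hp : p ∈ fareySubTriangle m) :
    (∀ i, 1 ≤ i → i ≤ r →
        fareyInv^[i] p = (p.1 - (i : ℝ) * p.2, p.1 - ((i : ℝ) - 1) * p.2)) ∧
      fareyInv p ∈ fareySubTriangle 1 ∧
      ∀ i, 2 ≤ i → i ≤ r → fareyInv^[i] p ∈ fareySubTriangle 2 := by
  obtain ⟨x, y⟩ := p
  simp only [fareySubTriangle, fareyTriangle, Set.mem_sep_iff, Set.mem_setOf_eq] at hp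
  obtain ⟨⟨hx0, hx1, hy0, hy1, hsum⟩, hfl⟩ := hp
  have hy : 0 < y := by linarith
  have hmy : (m : ℝ) * y ≤ 1 + x := by
    have h := Int.floor_le ((1 + x) / y)
    rw [hfl] at h
    have h' : (m : ℝ) ≤ (1 + x) / y := by exact_mod_cast h
    exact (le_div_iff₀ hy).mp h'
  have hmr : (4 * (r : ℝ) + 2) ≤ m := by exact_mod_cast hm
  have hrR : (1 : ℝ) ≤ r := by exact_mod_cast hr
  have hry : 2 * ((r : ℝ) * y) + y ≤ 1 := by nlinarith
  have h3y : 3 * y ≤ 1 := by nlinarith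
  -- the key iteration formula
  have key : ∀ i, 1 ≤ i → i ≤ r →
      fareyInv^[i] (x, y) = (x - (i : ℝ) * y, x - ((i : ℝ) - 1) * y) := by
    intro i hi1 hir
    induction i with
    | zero => omega
    | succ n ih =>
      rcases Nat.eq_or_lt_of_le hi1 with h1 | h1
      · -- i = 1
        have hn : n = 0 := by omega
        subst hn
        have hfloor : ⌊(1 + y) / x⌋ = (1 : ℤ) := by
          apply floor_div_eq_of _ _ _ (by linarith)
          · push_cast; linarith
          · push_cast; linarith
        rw [Function.iterate_succ_apply', Function.iterate_zero_apply]
        simp only [fareyInv, hfloor]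
        push_cast
        simp only [Prod.mk.injEq]
        constructor <;> ring
      · have hn1 : 1 ≤ n := by omega
        have hnr : n ≤ r := by omega
        have hnR : (n : ℝ) ≤ (r : ℝ) - 1 := by
          have : (n : ℝ) + 1 ≤ r := by exact_mod_cast hir
          linarith
        have hny : (n : ℝ) * y ≤ (r : ℝ) * y - y := by nlinarith
        have hny0 : 0 ≤ (n : ℝ) * y := mul_nonneg (by positivity) hy0
        rw [Function.iterate_succ_apply', ih hn1 hnr]
        have ha : (0 : ℝ) < x - (n : ℝ) * y := by linarith
        have hfloor : ⌊(1 + (x - ((n : ℝ) - 1) * y)) / (x - (n : ℝ) * y)⌋ = (2 : ℤ) := by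
          apply floor_div_eq_of _ _ _ ha
          · push_cast; linarith
          · push_cast; linarith
        simp only [fareyInv, hfloor]
        push_cast
        simp only [Prod.mk.injEq]
        constructor <;> ring
  refine ⟨key, ?_, ?_⟩
  · -- T⁻¹ p ∈ T₁
    have h1 : fareyInv (x, y) = (x - y, x) := by
      have h := key 1 le_rfl hr
      rw [Function.iterate_one] at h
      rw [h]
      norm_num
    rw [h1]
    simp only [fareySubTriangle, fareyTriangle, Set.mem_sep_iff, Set.mem_setOf_eq]
    refine ⟨⟨by linarith, by linarith, by linarith, by linarith, by linarith⟩, ?_⟩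
    apply floor_div_eq_of _ _ _ (by linarith)
    · push_cast; linarith
    · push_cast; linarith
  · intro i hi2 hir
    have hiR : (2 : ℝ) ≤ (i : ℝ) := by exact_mod_cast hi2
    have hirR : (i : ℝ) ≤ r := by exact_mod_cast hir
    have hiy : (i : ℝ) * y ≤ (r : ℝ) * y := by nlinarith
    have hiy0 : 0 ≤ (i : ℝ) * y := mul_nonneg (by positivity) hy0
    have h2y : 2 * y ≤ (i : ℝ) * y := by nlinarith
    rw [key i (by omega) hir]
    simp only [fareySubTriangle, fareyTriangle, Set.mem_sep_iff, Set.mem_setOf_eq]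
    have ha : (0 : ℝ) < x - (i : ℝ) * y := by linarith
    refine ⟨⟨by linarith, by linarith, by linarith, by linarith, by linarith⟩, ?_⟩
    apply floor_div_eq_of _ _ _ (by linarith)
    · push_cast; linarith
    · push_cast; linarith
end

section
/- Let r ≥ 1 and m ≥ 4r+2. Then for every (x,y) ∈ T_m, T(x,y) ∈ T_1, and for i ∈ {2,…,r}, T^i(x,y) = ((m+2−i)y − x, (m+1−i)y − x) ∈ T_2. -/
open Set MeasureTheory

theorem fareyMap_iterate_of_mem (r m : ℕ) (hr : 1 ≤ r) (hm : 4 * r + 2 ≤ m)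
    (p : ℝ × ℝ) (hp : p ∈ fareySubTriangle m) :
    fareyMap p ∈ fareySubTriangle 1 ∧
      ∀ i, 2 ≤ i → i ≤ r →
        fareyMap^[i] p =
            (((m : ℝ) + 2 - i) * p.2 - p.1, ((m : ℝ) + 1 - i) * p.2 - p.1) ∧
          fareyMap^[i] p ∈ fareySubTriangle 2 := by
  obtain ⟨x, y⟩ := p
  simp only [fareySubTriangle, fareyTriangle, mem_setOf_eq] at hp
  obtain ⟨⟨hx0, hx1, hy0, hy1, hsum⟩, hfl0⟩ := hp
  have hy : 0 < y := by linarith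
  have hrR : (1:ℝ) ≤ (r:ℝ) := by exact_mod_cast hr
  have hmR : 4*(r:ℝ)+2 ≤ (m:ℝ) := by exact_mod_cast hm
  have hfl := hfl0
  rw [Int.floor_eq_iff] at hfl
  push_cast at hfl
  have h1 : (m:ℝ)*y ≤ 1 + x := (le_div_iff₀ hy).mp hfl.1
  have h2 : 1 + x < ((m:ℝ)+1)*y := (div_lt_iff₀ hy).mp hfl.2
  have hp2 : ((4:ℝ)*(r:ℝ)+2)*y ≤ (m:ℝ)*y := mul_le_mul_of_nonneg_right hmR hy0
  have hp5 : 0 ≤ ((r:ℝ)+1)*y := mul_nonneg (by linarith) hy0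
  have hp6 : 0 ≤ ((r:ℝ)-1)*y := mul_nonneg (by linarith) hy0
  have hry1 : (2*(r:ℝ)+1)*y ≤ 1 := by linarith
  have hy13 : 3*y ≤ 1 := by linarith
  have hzpos : 0 < (m:ℝ)*y - x := by linarith
  have hz1 : (m:ℝ)*y - x ≤ 1 := by linarith
  have hfloor1 : ⌊(1 + y)/((m:ℝ)*y - x)⌋ = 1 := by
    rw [Int.floor_eq_iff]
    push_cast
    constructor
    · rw [le_div_iff₀ hzpos]; linarith
    · rw [div_lt_iff₀ hzpos]; linarith
  have hfm : fareyMap (x, y) = (y, (m:ℝ)*y - x) := by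
    simp [fareyMap, hfl0]
  clear hfl
  have first : fareyMap (x, y) ∈ fareySubTriangle 1 := by
    rw [hfm]
    simp only [fareySubTriangle, fareyTriangle, mem_setOf_eq]
    refine ⟨⟨hy0, hy1, le_of_lt hzpos, hz1, by linarith⟩, ?_⟩
    simpa using hfloor1
  have mem2 : ∀ i : ℕ, 2 ≤ i → i ≤ r →
      (((m:ℝ)+2-(i:ℝ))*y - x, ((m:ℝ)+1-(i:ℝ))*y - x) ∈ fareySubTriangle 2 := by
    intro i h2i hir
    have hiR2 : (2:ℝ) ≤ (i:ℝ) := by exact_mod_cast h2i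
    have hirR : (i:ℝ) ≤ (r:ℝ) := by exact_mod_cast hir
    have hp1 : (i:ℝ)*y ≤ (r:ℝ)*y := mul_le_mul_of_nonneg_right hirR hy0
    have hp3 : 0 ≤ ((i:ℝ)-2)*y := mul_nonneg (by linarith) hy0
    have hp4 : 0 ≤ (i:ℝ)*y := mul_nonneg (by positivity) hy0
    have hbpos : 0 < ((m:ℝ)+1-(i:ℝ))*y - x := by linarith
    have ha1 : ((m:ℝ)+2-(i:ℝ))*y - x ≤ 1 := by linarith
    simp only [fareySubTriangle, fareyTriangle, mem_setOf_eq]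
    refine ⟨⟨by linarith, ha1, le_of_lt hbpos, by linarith, by linarith⟩, ?_⟩
    show ⌊(1 + (((m:ℝ)+2-(i:ℝ))*y - x)) / (((m:ℝ)+1-(i:ℝ))*y - x)⌋ = ((2:ℕ):ℤ)
    rw [Int.floor_eq_iff]
    push_cast
    constructor
    · rw [le_div_iff₀ hbpos]; linarith
    · rw [div_lt_iff₀ hbpos]; linarith
  have main : ∀ i : ℕ, 2 ≤ i → i ≤ r →
      fareyMap^[i] (x, y) = (((m:ℝ)+2-(i:ℝ))*y - x, ((m:ℝ)+1-(i:ℝ))*y - x) := by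
    intro i
    induction i with
    | zero => omega
    | succ n ih =>
      intro h2 hir
      rcases Nat.lt_or_ge n 2 with h | h
      · have hn : n = 1 := by omega
        subst hn
        rw [Function.iterate_succ_apply', Function.iterate_one, hfm]
        simp only [fareyMap, hfloor1]
        push_cast
        simp only [Prod.mk.injEq]
        constructor <;> ring
      · have hq := ih h (by omega)
        have hmem := mem2 n h (by omega)
        obtain ⟨-, hfl2⟩ := hmem
        rw [Function.iterate_succ_apply', hq]
        simp only [fareyMap] at hfl2 ⊢
        rw [hfl2]
        push_cast
        simp only [Prod.mk.injEq]
        constructor <;> ring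
  refine ⟨first, fun i h2 hir => ⟨main i h2 hir, ?_⟩⟩
  rw [main i h2 hir]
  exact mem2 i h2 hir
end

section
/- Let k be an even positive integer, let D ⊆ T, and let Q be a positive integer. Then the number of coprime pairs (a,b) ∈ ℤ² in Q(T_k ∩ D) with a odd and b even equals the number of coprime pairs (c,d) ∈ ℤ² in Q·T(T_k ∩ D) with c even and d odd; likewise the number of such pairs with a,b both odd equals the number with c,d both odd. -/
open Set MeasureTheory

/-- Dilation of a planar set by the factor `Q`. -/
def dilate (Q : ℕ) (S : Set (ℝ × ℝ)) : Set (ℝ × ℝ) :=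
  (fun p : ℝ × ℝ => ((Q : ℝ) * p.1, (Q : ℝ) * p.2)) '' S

/-- Number of coprime lattice points of `S` with prescribed parities of the
two coordinates (`tt` = odd, `ff` = even). -/
noncomputable def latticeCount (S : Set (ℝ × ℝ)) (ox oy : Bool) : ℕ :=
  Set.ncard {p : ℤ × ℤ | ((p.1 : ℝ), (p.2 : ℝ)) ∈ S ∧ IsCoprime p.1 p.2 ∧
    (if ox then Odd p.1 else Even p.1) ∧ (if oy then Odd p.2 else Even p.2)}

lemma mem_dilate_iff' (k Q : ℕ) (S : Set (ℝ × ℝ)) (hS : S ⊆ fareySubTriangle k)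
    (a b : ℤ) :
    ((a : ℝ), (b : ℝ)) ∈ dilate Q S ↔
      ((b : ℝ), (((k : ℤ) * b - a : ℤ) : ℝ)) ∈ dilate Q (fareyMap '' S) := by
  constructor
  · rintro ⟨⟨x, y⟩, hxy, heq⟩
    have hκ : ⌊(1 + x) / y⌋ = (k : ℤ) := (hS hxy).2
    obtain ⟨h1, h2⟩ := Prod.mk.injEq .. ▸ heq
    refine ⟨fareyMap (x, y), ⟨(x, y), hxy, rfl⟩, ?_⟩
    simp only [fareyMap, hκ, Prod.mk.injEq]
    constructor
    · exact h2
    · push_cast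
      linear_combination (k : ℝ) * h2 - h1
  · rintro ⟨q, ⟨⟨x, y⟩, hxy, rfl⟩, heq⟩
    have hκ : ⌊(1 + x) / y⌋ = (k : ℤ) := (hS hxy).2
    simp only [fareyMap, hκ, Prod.mk.injEq] at heq
    obtain ⟨h1, h2⟩ := heq
    push_cast at h2
    refine ⟨(x, y), hxy, ?_⟩
    simp only [Prod.mk.injEq]
    exact ⟨by linear_combination (k : ℝ) * h1 - h2, h1⟩

lemma parity_aux (k a b : ℤ) (hke : Even k) (o : Bool) :
    (if o then Odd (k * b - a) else Even (k * b - a)) ↔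
      (if o then Odd a else Even a) := by
  have h : Even (k * b - a) ↔ Even a := by
    rw [Int.even_sub]
    simp [hke.mul_right b]
  have hOdd : Odd (k * b - a) ↔ Odd a := by
    rw [← Int.not_even_iff_odd, ← Int.not_even_iff_odd, h]
  cases o
  · simpa using h
  · simpa using hOdd

lemma count_eq (k Q : ℕ) (hke : Even (k : ℤ)) (S : Set (ℝ × ℝ))
    (hS : S ⊆ fareySubTriangle k) (ox oy : Bool) :
    latticeCount (dilate Q S) ox oy =
      latticeCount (dilate Q (fareyMap '' S)) oy ox := by
  set g : ℤ × ℤ → ℤ × ℤ := fun p => (p.2, (k : ℤ) * p.2 - p.1) with hg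
  have hginj : Function.Injective g := by
    intro p q h
    simp only [hg, Prod.mk.injEq] at h
    obtain ⟨h1, h2⟩ := h
    rw [h1] at h2
    exact Prod.ext (by linarith) h1
  have hset :
      {p : ℤ × ℤ | ((p.1 : ℝ), (p.2 : ℝ)) ∈ dilate Q (fareyMap '' S) ∧
          IsCoprime p.1 p.2 ∧ (if oy then Odd p.1 else Even p.1) ∧
          (if ox then Odd p.2 else Even p.2)} =
        g '' {p : ℤ × ℤ | ((p.1 : ℝ), (p.2 : ℝ)) ∈ dilate Q S ∧
          IsCoprime p.1 p.2 ∧ (if ox then Odd p.1 else Even p.1) ∧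
          (if oy then Odd p.2 else Even p.2)} := by
    ext ⟨c, d⟩
    constructor
    · rintro ⟨hmem, hcop, hpy, hpx⟩
      refine ⟨((k : ℤ) * c - d, c), ⟨?_, ?_, ?_, hpy⟩, ?_⟩
      · have h := (mem_dilate_iff' k Q S hS ((k : ℤ) * c - d) c).2
        have e : (k : ℤ) * c - ((k : ℤ) * c - d) = d := by ring
        rw [e] at h
        exact h hmem
      · have h1 : IsCoprime c (-d + c * (k : ℤ)) :=
          (hcop.neg_right).add_mul_left_right _
        have e : -d + c * (k : ℤ) = (k : ℤ) * c - d := by ring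
        rw [e] at h1
        exact h1.symm
      · have h := (parity_aux (k : ℤ) d c hke ox).2 hpx
        have e : (k : ℤ) * c - ((k : ℤ) * c - d) = d := by ring
        -- we need parity of k*c - d matching... use parity_aux with a := k*c - d?
        exact (parity_aux (k : ℤ) ((k : ℤ) * c - d) c hke ox).1 (by rw [e]; exact hpx)
      · simp only [hg]
        exact Prod.ext rfl (by ring)
    · rintro ⟨⟨a, b⟩, ⟨hmem, hcop, hpx, hpy⟩, heq⟩
      simp only [hg, Prod.mk.injEq] at heq
      obtain ⟨rfl, rfl⟩ := heq
      refine ⟨(mem_dilate_iff' k Q S hS a b).1 hmem, ?_, hpy, ?_⟩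
      · have h1 : IsCoprime b (-a + b * (k : ℤ)) :=
          (hcop.symm.neg_right).add_mul_left_right _
        have e : -a + b * (k : ℤ) = (k : ℤ) * b - a := by ring
        rw [e] at h1
        exact h1
      · exact (parity_aux (k : ℤ) a b hke ox).2 hpx
  unfold latticeCount
  rw [hset, Set.ncard_image_of_injective _ hginj]

theorem latticeCount_fareyMap_even (k Q : ℕ) (hk : 1 ≤ k) (hke : Even k)
    (hQ : 1 ≤ Q) (D : Set (ℝ × ℝ)) (hD : D ⊆ fareyTriangle) :
    latticeCount (dilate Q (fareySubTriangle k ∩ D)) true false =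
        latticeCount (dilate Q (fareyMap '' (fareySubTriangle k ∩ D))) false true ∧
      latticeCount (dilate Q (fareySubTriangle k ∩ D)) true true =
        latticeCount (dilate Q (fareyMap '' (fareySubTriangle k ∩ D))) true true := by
  have hke' : Even (k : ℤ) := by exact_mod_cast hke
  exact ⟨count_eq k Q hke' _ inter_subset_left true false,
    count_eq k Q hke' _ inter_subset_left true true⟩
end

section
/- Let k be an odd positive integer, D ⊆ T, and Q a positive integer. Then #{(a,b) ∈ Q(T_k ∩ D) ∩ ℤ²: gcd(a,b)=1, a odd, b odd} = #{(c,d) ∈ Q·T(T_k ∩ D) ∩ ℤ²: gcd(c,d)=1, c odd, d even}, and #{(a,b): gcd(a,b)=1, a even, b odd} = #{(c,d): gcd(c,d)=1, c odd, d odd}. -/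
open Set MeasureTheory

lemma fareyMap_eq_on {k : ℕ} {r : ℝ × ℝ} (hr : r ∈ fareySubTriangle k) :
    fareyMap r = (r.2, (k : ℝ) * r.2 - r.1) := by
  have h := hr.2
  simp only [fareyMap, h]
  push_cast
  rfl

lemma farey_fwd {k Q : ℕ} {S : Set (ℝ × ℝ)} (hS : S ⊆ fareySubTriangle k) {a b : ℤ}
    (h : ((a : ℝ), (b : ℝ)) ∈ dilate Q S) :
    (((b : ℤ) : ℝ), (((k : ℤ) * b - a : ℤ) : ℝ)) ∈ dilate Q (fareyMap '' S) := by
  obtain ⟨r, hrS, hre⟩ := h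
  obtain ⟨h1, h2⟩ := Prod.ext_iff.mp hre
  refine ⟨fareyMap r, ⟨r, hrS, rfl⟩, ?_⟩
  rw [fareyMap_eq_on (hS hrS)]
  refine Prod.ext_iff.mpr ⟨h2, ?_⟩
  simp only at h1 h2 ⊢
  push_cast
  linear_combination (k : ℝ) * h2 - h1

lemma farey_bwd {k Q : ℕ} {S : Set (ℝ × ℝ)} (hS : S ⊆ fareySubTriangle k) {a b : ℤ}
    (h : ((a : ℝ), (b : ℝ)) ∈ dilate Q (fareyMap '' S)) :
    ((((k : ℤ) * a - b : ℤ) : ℝ), ((a : ℤ) : ℝ)) ∈ dilate Q S := by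
  obtain ⟨p, ⟨r, hrS, hpr⟩, hre⟩ := h
  subst hpr
  rw [fareyMap_eq_on (hS hrS)] at hre
  obtain ⟨h1, h2⟩ := Prod.ext_iff.mp hre
  refine ⟨r, hrS, Prod.ext_iff.mpr ⟨?_, h1⟩⟩
  simp only at h1 h2 ⊢
  push_cast
  linear_combination (k : ℝ) * h1 - h2

lemma cop_iff (k a b : ℤ) : IsCoprime a b ↔ IsCoprime b (k * b - a) := by
  constructor
  · intro h
    have := (h.symm.neg_right).add_mul_left_right k
    rwa [show -a + b * k = k * b - a by ring] at this
  · intro h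
    have := (h.neg_right).add_mul_left_right k
    rw [show -(k * b - a) + b * k = a by ring] at this
    exact this.symm

lemma count_key (k Q : ℕ) (S : Set (ℝ × ℝ)) (hS : S ⊆ fareySubTriangle k)
    (ox oy ox' oy' : Bool)
    (hpar : ∀ a b : ℤ,
      (((if ox then Odd a else Even a) ∧ (if oy then Odd b else Even b)) ↔
       ((if ox' then Odd b else Even b) ∧
        (if oy' then Odd ((k : ℤ) * b - a) else Even ((k : ℤ) * b - a))))) :
    latticeCount (dilate Q S) ox oy = latticeCount (dilate Q (fareyMap '' S)) ox' oy' := by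
  classical
  set f : ℤ × ℤ → ℤ × ℤ := fun p => (p.2, (k : ℤ) * p.2 - p.1) with hf
  have hinj : Function.Injective f := by
    intro p q h
    simp only [hf, Prod.mk.injEq] at h
    obtain ⟨h1, h2⟩ := h
    rw [h1] at h2
    exact Prod.ext_iff.mpr ⟨by linarith, h1⟩
  have hset : {p : ℤ × ℤ | ((p.1 : ℝ), (p.2 : ℝ)) ∈ dilate Q (fareyMap '' S) ∧
        IsCoprime p.1 p.2 ∧
        (if ox' then Odd p.1 else Even p.1) ∧ (if oy' then Odd p.2 else Even p.2)} =
      f '' {p : ℤ × ℤ | ((p.1 : ℝ), (p.2 : ℝ)) ∈ dilate Q S ∧ IsCoprime p.1 p.2 ∧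
        (if ox then Odd p.1 else Even p.1) ∧ (if oy then Odd p.2 else Even p.2)} := by
    ext q
    constructor
    · rintro ⟨hm, hc, h1, h2⟩
      have hkey : (k : ℤ) * q.1 - ((k : ℤ) * q.1 - q.2) = q.2 := by ring
      refine ⟨((k : ℤ) * q.1 - q.2, q.1), ⟨farey_bwd hS hm, ?_, ?_, ?_⟩, ?_⟩
      · refine (cop_iff k _ _).mpr ?_
        rwa [hkey]
      · have := (hpar ((k : ℤ) * q.1 - q.2) q.1)
        rw [hkey] at this
        exact (this.mpr ⟨h1, h2⟩).1
      · have := (hpar ((k : ℤ) * q.1 - q.2) q.1)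
        rw [hkey] at this
        exact (this.mpr ⟨h1, h2⟩).2
      · simp only [hf]
        exact Prod.ext_iff.mpr ⟨rfl, by ring⟩
    · rintro ⟨p, ⟨hm, hc, h1, h2⟩, rfl⟩
      exact ⟨farey_fwd hS hm, (cop_iff k p.1 p.2).mp hc,
        ((hpar p.1 p.2).mp ⟨h1, h2⟩).1, ((hpar p.1 p.2).mp ⟨h1, h2⟩).2⟩
  unfold latticeCount
  rw [hset, Set.ncard_image_of_injective _ hinj]

theorem latticeCount_fareyMap_odd (k Q : ℕ) (hk : 1 ≤ k) (hko : Odd k)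
    (hQ : 1 ≤ Q) (D : Set (ℝ × ℝ)) (hD : D ⊆ fareyTriangle) :
    latticeCount (dilate Q (fareySubTriangle k ∩ D)) true true =
        latticeCount (dilate Q (fareyMap '' (fareySubTriangle k ∩ D))) true false ∧
      latticeCount (dilate Q (fareySubTriangle k ∩ D)) false true =
        latticeCount (dilate Q (fareyMap '' (fareySubTriangle k ∩ D))) true true := by
  have hkZ : Odd (k : ℤ) := by exact_mod_cast hko
  constructor
  · refine count_key k Q _ inter_subset_left true true true false ?_
    intro a b
    simp only [if_true, if_false, reduceIte]
    constructor
    · rintro ⟨ha, hb⟩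
      exact ⟨hb, (hkZ.mul hb).sub_odd ha⟩
    · rintro ⟨hb, he⟩
      have := (hkZ.mul hb).sub_even he
      rw [show (k : ℤ) * b - ((k : ℤ) * b - a) = a by ring] at this
      exact ⟨this, hb⟩
  · refine count_key k Q _ inter_subset_left false true true true ?_
    intro a b
    simp only [if_true, if_false, reduceIte]
    constructor
    · rintro ⟨ha, hb⟩
      exact ⟨hb, (hkZ.mul hb).sub_even ha⟩
    · rintro ⟨hb, hd⟩
      have := (hkZ.mul hb).sub_odd hd
      rw [show (k : ℤ) * b - ((k : ℤ) * b - a) = a by ring] at this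
      exact ⟨this, hb⟩
end

section
/- If γ = a/q and γ'' = a''/q'' are consecutive elements of F_{Q,odd} (Farey fractions of order Q with odd denominators) with a''q − aq'' > 1, then there is exactly one fraction γ' = a'/q' in F_Q with γ < γ' < γ'' such that γ, γ', γ'' are consecutive in F_Q, and a''q − aq'' = ⌊(Q+q)/q'⌋. -/
/-- `(a, q)` represents an element of `F_{Q,odd}`: a Farey fraction of order
`Q` with odd denominator. -/
def IsFareyOdd (Q a q : ℕ) : Prop := IsFarey Q a q ∧ Odd q

/-- `a/q < a'/q'` are consecutive elements of `F_{Q,odd}`. -/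
def FareyOddConsecutive (Q a q a' q' : ℕ) : Prop :=
  IsFareyOdd Q a q ∧ IsFareyOdd Q a' q' ∧ (a : ℚ) / q < (a' : ℚ) / q' ∧
    ∀ b c : ℕ, IsFareyOdd Q b c →
      ¬((a : ℚ) / q < (b : ℚ) / c ∧ (b : ℚ) / c < (a' : ℚ) / q')

/-!
Neighbours a/q < b/c in `F_Q` are exactly the pairs with `b q - a c = 1` and `q + c > Q`: a
fraction y/z strictly between them has `z = c (y q - a z) + q (b z - y c) ≥ q + c`, and for
every `a/q < 1` such a `b/c` exists (choose `c ≡ -a⁻¹ mod q` in `(Q - q, Q]`). Every Farey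
fraction strictly between the odd neighbours `γ < γ''` has even denominator, and neighbours
in `F_Q` have determinant 1, so they cannot both have even denominators: exactly one `γ' = b/c`
lies between. Then `(a'' q - a q'') c = q + q''` with `q'' ≤ Q < c + q''` gives the floor.
-/

lemma natCast_div_lt_natCast_div_iff {b c b' c' : ℕ} (hc : 0 < c) (hc' : 0 < c') :
    (b : ℚ) / c < (b' : ℚ) / c' ↔ (b : ℤ) * c' < b' * c := by
  rw [div_lt_div_iff₀ (by exact_mod_cast hc) (by exact_mod_cast hc')]
  norm_cast

lemma exists_mem_Ioc_dvd_mul_add_one {a q : ℤ} (h : IsCoprime a q) (hq : 0 < q) (Q : ℤ) :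
    ∃ c ∈ Set.Ioc (Q - q) Q, q ∣ a * c + 1 := by
  obtain ⟨x, y, hxy⟩ := h
  refine ⟨Q - (Q + x) % q, ⟨?_, ?_⟩, y + a * ((Q + x) / q), ?_⟩
  · linarith [Int.emod_lt_of_pos (Q + x) hq]
  · linarith [Int.emod_nonneg (Q + x) hq.ne']
  · linear_combination (-a) * Int.emod_add_ediv_mul (Q + x) q - hxy

section Farey

variable {Q a q b c : ℕ}

lemma IsFarey.den_pos (h : IsFarey Q a q) : 0 < q := h.1.trans h.2.1

lemma IsFarey.eq_of_div_eq {a' q' : ℕ} (h : IsFarey Q a q) (h' : IsFarey Q a' q')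
    (heq : (a : ℚ) / q = (a' : ℚ) / q') : a = a' ∧ q = q' := by
  have := Rat.div_int_inj (a := a) (b := q) (c := a') (d := q')
    (by exact_mod_cast h.den_pos) (by exact_mod_cast h'.den_pos)
    (by simpa using h.2.2.2) (by simpa using h'.2.2.2) (by simpa using heq)
  exact_mod_cast this

lemma IsFarey.num_lt_den_of_div_lt (hq : 0 < q) (h : IsFarey Q b c)
    (hlt : (a : ℚ) / q < (b : ℚ) / c) : a < q := by
  rw [natCast_div_lt_natCast_div_iff hq h.den_pos] at hlt
  have hbc : (b : ℤ) ≤ c := by exact_mod_cast h.2.1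
  by_contra! hqa
  have : (q : ℤ) ≤ a := by exact_mod_cast hqa
  nlinarith

lemma IsFarey.exists_det_eq_one (h : IsFarey Q a q) (ha : a < q) :
    ∃ b c : ℕ, IsFarey Q b c ∧ (b : ℤ) * q - a * c = 1 ∧ Q < q + c := by
  obtain ⟨ha1, -, hqQ, hcop⟩ := h
  obtain ⟨c, ⟨hc_gt, hc_le⟩, b, hb⟩ := exists_mem_Ioc_dvd_mul_add_one
    (Nat.isCoprime_iff_coprime.2 hcop) (by omega) Q
  lift c to ℕ using (by omega)
  lift b to ℕ using (by nlinarith)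
  have hdet : (b : ℤ) * q - a * c = 1 := by linarith
  refine ⟨b, c, ⟨?_, ?_, by omega, ?_⟩, hdet, by omega⟩
  · by_contra! hb0
    nlinarith
  · by_contra! hcb
    nlinarith
  · exact Nat.isCoprime_iff_coprime.1 ⟨q, -a, by linarith⟩

lemma fareyConsecutive_of_det_eq_one (h : IsFarey Q a q) (h' : IsFarey Q b c)
    (hdet : (b : ℤ) * q - a * c = 1) (hQ : Q < q + c) : FareyConsecutive Q a q b c := by
  refine ⟨h, h', (natCast_div_lt_natCast_div_iff h.den_pos h'.den_pos).2 (by omega), ?_⟩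
  rintro y z hyz ⟨hlo, hhi⟩
  rw [natCast_div_lt_natCast_div_iff h.den_pos hyz.den_pos] at hlo
  rw [natCast_div_lt_natCast_div_iff hyz.den_pos h'.den_pos] at hhi
  have hz : (z : ℤ) = c * (y * q - a * z) + q * (b * z - y * c) := by
    linear_combination (-(z : ℤ)) * hdet
  have hzQ : (z : ℤ) ≤ Q := by exact_mod_cast hyz.2.2.1
  nlinarith [(Nat.cast_nonneg c : (0 : ℤ) ≤ c), (Nat.cast_nonneg q : (0 : ℤ) ≤ q)]

lemma IsFarey.exists_fareyConsecutive (h : IsFarey Q a q) (ha : a < q) :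
    ∃ b c : ℕ, FareyConsecutive Q a q b c := by
  obtain ⟨b, c, hbc, hdet, hQ⟩ := h.exists_det_eq_one ha
  exact ⟨b, c, fareyConsecutive_of_det_eq_one h hbc hdet hQ⟩

lemma FareyConsecutive.right_unique {b' c' : ℕ} (h : FareyConsecutive Q a q b c)
    (h' : FareyConsecutive Q a q b' c') : b = b' ∧ c = c' := by
  apply h.2.1.eq_of_div_eq h'.2.1
  rcases lt_trichotomy ((b : ℚ) / c) ((b' : ℚ) / c') with hlt | heq | hgt
  · exact absurd ⟨h.2.2.1, hlt⟩ (h'.2.2.2 b c h.2.1)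
  · exact heq
  · exact absurd ⟨h'.2.2.1, hgt⟩ (h.2.2.2 b' c' h'.2.1)

lemma FareyConsecutive.div_le_of_lt {a'' q'' : ℕ} (h : FareyConsecutive Q a q b c)
    (h'' : IsFarey Q a'' q'') (hlt : (a : ℚ) / q < (a'' : ℚ) / q'') :
    (b : ℚ) / c ≤ (a'' : ℚ) / q'' :=
  not_lt.1 fun hgt => h.2.2.2 a'' q'' h'' ⟨hlt, hgt⟩

lemma FareyConsecutive.det_eq_one_and_lt_add (h : FareyConsecutive Q a q b c) :
    (b : ℤ) * q - a * c = 1 ∧ Q < q + c := by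
  obtain ⟨b', c', hbc', hdet, hQ⟩ :=
    h.1.exists_det_eq_one (h.2.1.num_lt_den_of_div_lt h.1.den_pos h.2.2.1)
  obtain ⟨rfl, rfl⟩ := h.right_unique (fareyConsecutive_of_det_eq_one h.1 hbc' hdet hQ)
  exact ⟨hdet, hQ⟩

lemma FareyConsecutive.not_even_of_even (h : FareyConsecutive Q a q b c) (hq : Even q) :
    ¬Even c := fun hc => by
  have h2 : (2 : ℤ) ∣ (b : ℤ) * q - a * c :=
    dvd_sub (dvd_mul_of_dvd_right (by exact_mod_cast hq.two_dvd) _)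
      (dvd_mul_of_dvd_right (by exact_mod_cast hc.two_dvd) _)
  rw [h.det_eq_one_and_lt_add.1] at h2
  omega

lemma FareyOddConsecutive.even_den_of_between {a'' q'' : ℕ}
    (h : FareyOddConsecutive Q a q a'' q'') (hbc : IsFarey Q b c)
    (hlo : (a : ℚ) / q < (b : ℚ) / c) (hhi : (b : ℚ) / c < (a'' : ℚ) / q'') : Even c :=
  Nat.not_odd_iff_even.1 fun hc => h.2.2.2 b c ⟨hbc, hc⟩ ⟨hlo, hhi⟩

lemma FareyConsecutive.det_outer_eq_div {a'' q'' : ℕ} (hL : FareyConsecutive Q a q b c)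
    (hR : FareyConsecutive Q b c a'' q'') :
    (a'' : ℤ) * q - a * q'' = ((Q + q) / c : ℕ) := by
  obtain ⟨hdL, -⟩ := hL.det_eq_one_and_lt_add
  obtain ⟨hdR, hQ⟩ := hR.det_eq_one_and_lt_add
  have hlt := (natCast_div_lt_natCast_div_iff hL.1.den_pos hR.2.1.den_pos).1
    (hL.2.2.1.trans hR.2.2.1)
  obtain ⟨Δ, hΔ⟩ := Int.eq_ofNat_of_zero_le (sub_nonneg.2 hlt.le)
  have hmul : Δ * c = q + q'' := by
    have : ((a'' : ℤ) * q - a * q'') * c = q + q'' := by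
      linear_combination (q : ℤ) * hdR + (q'' : ℤ) * hdL
    rw [hΔ] at this
    exact_mod_cast this
  have hq'' := hR.2.1.2.2.1
  rw [hΔ, Nat.div_eq_of_lt_le (k := Δ) (by omega) (by rw [add_one_mul]; omega)]

end Farey

theorem fareyOdd_consecutive_delta (Q a q a'' q'' : ℕ)
    (h : FareyOddConsecutive Q a q a'' q'')
    (hΔ : 1 < (a'' : ℤ) * q - a * q'') :
    ∃! p : ℕ × ℕ,
      FareyConsecutive Q a q p.1 p.2 ∧ FareyConsecutive Q p.1 p.2 a'' q'' ∧
        (a'' : ℤ) * q - a * q'' = ((Q + q) / p.2 : ℕ) := by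
  have ⟨⟨hF, _⟩, ⟨hF'', _⟩, hlt, _⟩ := h
  obtain ⟨b, c, hL⟩ := hF.exists_fareyConsecutive (hF''.num_lt_den_of_div_lt hF.den_pos hlt)
  have hbc_lt : (b : ℚ) / c < a'' / q'' := by
    refine (hL.div_le_of_lt hF'' hlt).lt_of_ne fun heq => ?_
    obtain ⟨rfl, rfl⟩ := hL.2.1.eq_of_div_eq hF'' heq
    linarith [hL.det_eq_one_and_lt_add.1]
  have hc := h.even_den_of_between hL.2.1 hL.2.2.1 hbc_lt
  obtain ⟨d, e, hR⟩ := hL.2.1.exists_fareyConsecutive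
    (hF''.num_lt_den_of_div_lt hL.2.1.den_pos hbc_lt)
  have hde : (d : ℚ) / e = a'' / q'' := by
    refine (hR.div_le_of_lt hF'' hbc_lt).eq_of_not_lt fun hde_lt => ?_
    exact hR.not_even_of_even hc (h.even_den_of_between hR.2.1 (hL.2.2.1.trans hR.2.2.1) hde_lt)
  obtain ⟨rfl, rfl⟩ := hR.2.1.eq_of_div_eq hF'' hde
  refine ⟨(b, c), ⟨hL, hR, hL.det_outer_eq_div hR⟩, ?_⟩
  rintro ⟨b', c'⟩ ⟨hL', -, -⟩
  obtain ⟨rfl, rfl⟩ := hL.right_unique hL'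
  rfl
end
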